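/- Let K be a field, let A be a finite set of polynomials in K[x_1,…,x_n], let G be a chordal structure of A whose vertex set is contained in {x_1,…,x_n}, and suppose x_n > x_{n−1} > ⋯ > x_1 is a perfect elimination ordering of G. Define the projection procedure P_n = A and P_i = Proj(P_{i+1}, x_{i+1}) for i = n−1, …, 1, where for a finite set B and a variable x, Proj(B, x) is the union of all nonzero coefficients of the members of B regarded as univariate polynomials in x, the resultants res(f, ∂f/∂x, x) for f ∈ B, and the pairwise resultants res(f, g, x) for distinct f, g ∈ B. Then for every i = 1, …, n, G is a chordal structure of P_i; in particular every polynomial in P_i involves only the variables x_1, …, x_i. -/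

import Mathlib

open MvPolynomial

/-- The associated graph of a set of multivariate polynomials: vertices are variables,
with an edge between two distinct variables iff some polynomial contains both. -/
def assocGraph {σ R : Type*} [CommSemiring R] [DecidableEq σ]
    (F : Set (MvPolynomial σ R)) : SimpleGraph σ where
  Adj i j := i ≠ j ∧ ∃ f ∈ F, i ∈ f.vars ∧ j ∈ f.vars
  symm := by
    constructor
    intro i j h
    exact ⟨h.1.symm, by obtain ⟨f, hf, hi, hj⟩ := h.2; exact ⟨f, hf, hj, hi⟩⟩
  loopless := by constructor; intro i h; exact h.1 rfl

/-- `lt` (a strict linear ordering of the vertices) is a perfect elimination ordering of `G`: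
for every vertex `v`, the vertex `v` together with its earlier neighbours forms a clique. -/
def IsPEO {V : Type*} (G : SimpleGraph V) (lt : V → V → Prop) : Prop :=
  ∀ v : V, G.IsClique (insert v {u | lt u v ∧ G.Adj u v})

/-- A graph is chordal if it admits a perfect elimination ordering. -/
def ChordalGraph {V : Type*} (G : SimpleGraph V) : Prop :=
  ∃ lt : V → V → Prop, IsStrictTotalOrder V lt ∧ IsPEO G lt

/-- `G` is a chordal structure of `F`: `G` is chordal and the associated graph of `F`
is a subgraph of `G`. -/
def ChordalStructure {σ R : Type*} [CommSemiring R] [DecidableEq σ]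
    (G : SimpleGraph σ) (F : Set (MvPolynomial σ R)) : Prop :=
  ChordalGraph G ∧ assocGraph F ≤ G

/-- `f` regarded as a univariate polynomial in the variable `k`,
with coefficients in the polynomial ring in the remaining variables. -/
noncomputable def toUnivar {σ R : Type*} [CommSemiring R] [DecidableEq σ] (k : σ)
    (f : MvPolynomial σ R) : Polynomial (MvPolynomial {j : σ // j ≠ k} R) :=
  optionEquivLeft R {j : σ // j ≠ k} (rename (Equiv.optionSubtypeNe k).symm f)

/-- The `i`-th coefficient of `f` regarded as a univariate polynomial in `k`,
viewed again as a polynomial in all the variables. -/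
noncomputable def coeffWrt {σ R : Type*} [CommSemiring R] [DecidableEq σ] (k : σ)
    (f : MvPolynomial σ R) (i : ℕ) : MvPolynomial σ R :=
  rename Subtype.val ((toUnivar k f).coeff i)

/-- The leading coefficient of `f` regarded as a univariate polynomial in `k`. -/
noncomputable def lcWrt {σ R : Type*} [CommSemiring R] [DecidableEq σ] (k : σ)
    (f : MvPolynomial σ R) : MvPolynomial σ R :=
  rename Subtype.val (toUnivar k f).leadingCoeff

/-- The Sylvester matrix of two univariate polynomials `p` and `q`:
the first `q.natDegree` rows are the shifted coefficient vectors of `p`,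
the remaining `p.natDegree` rows are the shifted coefficient vectors of `q`. -/
noncomputable def sylvesterMatrix {R : Type*} [CommRing R] (p q : Polynomial R) :
    Matrix (Fin (q.natDegree + p.natDegree)) (Fin (q.natDegree + p.natDegree)) R :=
  Matrix.of fun i j =>
    if (i : ℕ) < q.natDegree then
      (if (i : ℕ) ≤ (j : ℕ) ∧ (j : ℕ) ≤ (i : ℕ) + p.natDegree
        then p.coeff (p.natDegree - ((j : ℕ) - (i : ℕ))) else 0)
    else
      (if (i : ℕ) - q.natDegree ≤ (j : ℕ) ∧ (j : ℕ) ≤ ((i : ℕ) - q.natDegree) + q.natDegree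
        then q.coeff (q.natDegree - ((j : ℕ) - ((i : ℕ) - q.natDegree))) else 0)

/-- The resultant of two univariate polynomials: the determinant of their Sylvester matrix. -/
noncomputable def resultant {R : Type*} [CommRing R] (p q : Polynomial R) : R :=
  (sylvesterMatrix p q).det

/-- The resultant of `f` and `g` with respect to the variable `k`: the resultant of `f` and `g`
regarded as univariate polynomials in `k`, viewed again as a polynomial in all the variables. -/
noncomputable def resWrt {σ R : Type*} [CommRing R] [DecidableEq σ] (k : σ)
    (f g : MvPolynomial σ R) : MvPolynomial σ R :=
  rename Subtype.val (resultant (toUnivar k f) (toUnivar k g))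

/-- The CAD projection operator: the nonzero coefficients (w.r.t. `x`) of the members of `A`,
the resultants `res(f, ∂f/∂x, x)` for `f ∈ A`, and the pairwise resultants `res(f, g, x)` for
distinct `f, g ∈ A`. -/
noncomputable def ProjSet {σ R : Type*} [CommRing R] [DecidableEq σ] (x : σ)
    (A : Set (MvPolynomial σ R)) : Set (MvPolynomial σ R) :=
  {a | (∃ f ∈ A, ∃ i : ℕ, a = coeffWrt x f i) ∧ a ≠ 0} ∪
  {r | ∃ f ∈ A, r = resWrt x f (pderiv x f)} ∪
  {r | ∃ f ∈ A, ∃ g ∈ A, f ≠ g ∧ r = resWrt x f g}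


section CC
variable {R : Type*} [CommSemiring R] {S : Type*} [DecidableEq S]

omit [DecidableEq S] in
theorem optionEquivLeft_monomial (j : Option S →₀ ℕ) (r : R) :
    optionEquivLeft R S (monomial j r) = Polynomial.monomial (j none) (monomial j.some r) := by
  rw [optionEquivLeft_apply, aeval_monomial]
  rw [Finsupp.prod_option_index]
  · simp only [Option.elim]
    have : (j.some.prod fun s k => (Polynomial.C (X s) : Polynomial (MvPolynomial S R)) ^ k)
        = Polynomial.C (j.some.prod fun s k => (X s : MvPolynomial S R) ^ k) := by
      rw [Finsupp.prod, Finsupp.prod, map_prod]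
      simp [map_pow]
    rw [this, monomial_eq, ← Polynomial.C_mul_X_pow_eq_monomial, map_mul]
    have ha : (algebraMap R (Polynomial (MvPolynomial S R))) r = Polynomial.C (C r) := by
      simp [Polynomial.algebraMap_apply, algebraMap_eq]
    rw [ha]; ring
  · intro; simp
  · intros; rw [pow_add]

omit [DecidableEq S] in
theorem finsupp_option_eq_iff (j : Option S →₀ ℕ) (i : ℕ) (m : S →₀ ℕ) :
    j = Finsupp.single none i + m.mapDomain some ↔ j none = i ∧ j.some = m := by
  constructor
  · rintro rfl
    constructor
    · simp [Finsupp.mapDomain_notin_range]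
    · ext s; simp [Finsupp.mapDomain_apply (Option.some_injective S)]
  · rintro ⟨h1, h2⟩
    ext o
    cases o with
    | none => simp [← h1, Finsupp.mapDomain_notin_range]
    | some s =>
      have := DFunLike.congr_fun h2 s
      simp only [Finsupp.some_apply] at this
      simp [Finsupp.mapDomain_apply (Option.some_injective S), ← this]

theorem optionEquivLeft_coeff_coeff (m : S →₀ ℕ) (g : MvPolynomial (Option S) R) (i : ℕ) :
    coeff m ((optionEquivLeft R S g).coeff i) =
      coeff (Finsupp.single none i + m.mapDomain some) g := by
  induction' g using MvPolynomial.induction_on' with j r p q hp hq generalizing i m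
  swap
  · simp only [map_add, Polynomial.coeff_add, coeff_add, hp, hq]
  rw [optionEquivLeft_monomial, Polynomial.coeff_monomial, coeff_monomial]
  by_cases h : j = Finsupp.single none i + m.mapDomain some
  · rw [if_pos h]
    obtain ⟨h1, h2⟩ := (finsupp_option_eq_iff j i m).mp h
    rw [h1, if_pos rfl, coeff_monomial, if_pos h2]
  · rw [if_neg h]
    rw [finsupp_option_eq_iff] at h
    push_neg at h
    by_cases h1 : j none = i
    · rw [h1, if_pos rfl, coeff_monomial, if_neg (h h1)]
    · rw [if_neg h1, coeff_zero]

theorem mem_vars_optionEquivLeft_coeff {g : MvPolynomial (Option S) R} {i : ℕ} {w : S}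
    (h : w ∈ ((optionEquivLeft R S g).coeff i).vars) : some w ∈ g.vars := by
  rw [mem_vars] at h ⊢
  obtain ⟨m, hm, hw⟩ := h
  refine ⟨Finsupp.single none i + m.mapDomain some, ?_, ?_⟩
  · rw [MvPolynomial.mem_support_iff]
    rwa [MvPolynomial.mem_support_iff, _root_.optionEquivLeft_coeff_coeff] at hm
  · rw [Finsupp.mem_support_iff]
    simp only [Finsupp.add_apply, Finsupp.single_apply, Finsupp.mapDomain_apply
      (Option.some_injective S)]
    simpa using Finsupp.mem_support_iff.mp hw
end CC

section ToUnivar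
variable {σ R : Type*} [CommSemiring R] [DecidableEq σ] {k : σ}

theorem mem_vars_toUnivar_coeff {f : MvPolynomial σ R} {i : ℕ} {w : {j : σ // j ≠ k}}
    (h : w ∈ ((toUnivar k f).coeff i).vars) : w.val ∈ f.vars := by
  have h2 : some w ∈ (rename (Equiv.optionSubtypeNe k).symm f).vars :=
    mem_vars_optionEquivLeft_coeff h
  obtain ⟨v, hv, hev⟩ := mem_vars_rename _ _ h2
  by_cases hvk : v = k
  · subst hvk
    rw [Equiv.optionSubtypeNe_symm_self] at hev
    exact absurd hev (by simp)
  · rw [Equiv.optionSubtypeNe_symm_of_ne hvk] at hev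
    obtain rfl : (⟨v, hvk⟩ : {j : σ // j ≠ k}) = w := Option.some_injective _ hev
    exact hv

theorem mem_vars_coeffWrt {f : MvPolynomial σ R} {i : ℕ} {u : σ}
    (h : u ∈ (coeffWrt k f i).vars) : u ∈ f.vars ∧ u ≠ k := by
  obtain ⟨w, hw, rfl⟩ := mem_vars_rename _ _ h
  exact ⟨mem_vars_toUnivar_coeff hw, w.2⟩

theorem vars_pderiv_subset (x : σ) (f : MvPolynomial σ R) :
    (pderiv x f).vars ⊆ f.vars := by
  intro u hu
  by_contra hun
  by_cases hxu : x = u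
  · subst hxu
    rw [pderiv_eq_zero_of_notMem_vars hun] at hu
    simp [vars_0] at hu
  · have hr : ↑f.vars ⊆ Set.range (Subtype.val : {j : σ // j ≠ u} → σ) := by
      intro v hv
      exact ⟨⟨v, fun hh => hun (hh ▸ hv)⟩, rfl⟩
    obtain ⟨q, hq⟩ := exists_rename_eq_of_vars_subset_range f Subtype.val Subtype.val_injective hr
    have hx : x = (⟨x, hxu⟩ : {j : σ // j ≠ u}).val := rfl
    rw [← hq, hx, pderiv_rename Subtype.val_injective] at hu
    obtain ⟨w, _, hw⟩ := mem_vars_rename _ _ hu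
    exact w.2 hw

theorem toUnivar_eq_C {f : MvPolynomial σ R} (hk : k ∉ f.vars) :
    ∃ c : MvPolynomial {j : σ // j ≠ k} R,
      toUnivar k f = Polynomial.C c ∧ rename Subtype.val c = f := by
  have hr : ↑f.vars ⊆ Set.range (Subtype.val : {j : σ // j ≠ k} → σ) := by
    intro v hv
    exact ⟨⟨v, fun hh => hk (hh ▸ hv)⟩, rfl⟩
  obtain ⟨q, hq⟩ := exists_rename_eq_of_vars_subset_range f Subtype.val Subtype.val_injective hr
  refine ⟨q, ?_, hq⟩
  rw [toUnivar, ← hq, rename_rename]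
  have hcomp : ((Equiv.optionSubtypeNe k).symm ∘ Subtype.val : {j : σ // j ≠ k} → Option _)
      = some := by
    funext u
    rw [Function.comp_apply, Equiv.optionSubtypeNe_symm_of_ne u.2]
  rw [hcomp]
  have h2 : rename (some : {j : σ // j ≠ k} → Option _) q
      = (optionEquivLeft R {j : σ // j ≠ k}).symm (Polynomial.C q) := by
    rw [optionEquivLeft_symm_apply, Polynomial.aevalTower_C]
  rw [h2, AlgEquiv.apply_symm_apply]

end ToUnivar

section Res
variable {σ R : Type*} [CommRing R] [DecidableEq σ] {k : σ}

theorem mem_vars_det {S : Type*} [DecidableEq S] {N : Type*} [DecidableEq N] [Fintype N]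
    (M : Matrix N N (MvPolynomial S R)) {w : S} (h : w ∈ M.det.vars) :
    ∃ i j, w ∈ (M i j).vars := by
  rw [Matrix.det_apply'] at h
  have h1 := vars_sum_subset (Finset.univ : Finset (Equiv.Perm N))
    (fun s => (((Equiv.Perm.sign s : ℤ) : MvPolynomial S R) * ∏ i, M (s i) i)) h
  rw [Finset.mem_biUnion] at h1
  obtain ⟨s, -, hs⟩ := h1
  have h2 := vars_mul _ _ hs
  rw [Finset.mem_union] at h2
  rcases h2 with h2 | h2
  · exfalso
    have : ((Equiv.Perm.sign s : ℤ) : MvPolynomial S R)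
        = C ((Equiv.Perm.sign s : ℤ) : R) := by
      rw [← map_intCast (C : R →+* MvPolynomial S R)]
    rw [this, vars_C] at h2
    simp at h2
  · have h3 := vars_prod (s := (Finset.univ : Finset N)) (fun i => M (s i) i) h2
    rw [Finset.mem_biUnion] at h3
    obtain ⟨i, -, hi⟩ := h3
    exact ⟨s i, i, hi⟩

theorem mem_vars_resWrt {f g : MvPolynomial σ R} {u : σ}
    (h : u ∈ (resWrt k f g).vars) : (u ∈ f.vars ∨ u ∈ g.vars) ∧ u ≠ k := by
  obtain ⟨w, hw, rfl⟩ := mem_vars_rename _ _ h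
  refine ⟨?_, w.2⟩
  rw [resultant] at hw
  obtain ⟨i, j, hij⟩ := mem_vars_det _ hw
  rw [sylvesterMatrix, Matrix.of_apply] at hij
  split_ifs at hij with h1 h2 h3
  · exact Or.inl (mem_vars_toUnivar_coeff hij)
  · simp [vars_0] at hij
  · exact Or.inr (mem_vars_toUnivar_coeff hij)
  · simp [vars_0] at hij

theorem resultant_C_left {A : Type*} [CommRing A] (c : A) (q : Polynomial A) :
    resultant (Polynomial.C c) q = c ^ q.natDegree := by
  have hd : (Polynomial.C c).natDegree = 0 := Polynomial.natDegree_C c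
  have hM : sylvesterMatrix (Polynomial.C c) q = Matrix.diagonal (fun _ => c) := by
    ext i j
    have hi : (i : ℕ) < q.natDegree := by
      have := i.isLt; omega
    rw [sylvesterMatrix, Matrix.of_apply, if_pos hi, Matrix.diagonal_apply]
    by_cases hij : i = j
    · subst hij
      rw [if_pos ⟨le_refl _, by omega⟩, if_pos rfl]
      simp [hd]
    · rw [if_neg hij, if_neg]
      intro ⟨ha, hb⟩
      exact hij (Fin.ext (by omega))
  rw [resultant, hM, Matrix.det_diagonal, Finset.prod_const, Finset.card_univ,
    Fintype.card_fin, hd, add_zero]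

theorem resultant_C_right {A : Type*} [CommRing A] (c : A) (p : Polynomial A) :
    resultant p (Polynomial.C c) = c ^ p.natDegree := by
  have hd : (Polynomial.C c).natDegree = 0 := Polynomial.natDegree_C c
  have hM : sylvesterMatrix p (Polynomial.C c) = Matrix.diagonal (fun _ => c) := by
    ext i j
    have hi : ¬ ((i : ℕ) < (Polynomial.C c).natDegree) := by omega
    rw [sylvesterMatrix, Matrix.of_apply, if_neg hi, Matrix.diagonal_apply]
    by_cases hij : i = j
    · subst hij
      rw [if_pos ⟨by omega, by omega⟩, if_pos rfl]
      have h0 : (Polynomial.C c).natDegree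
          - ((i : ℕ) - ((i : ℕ) - (Polynomial.C c).natDegree)) = 0 := by omega
      rw [h0, Polynomial.coeff_C_zero]
    · rw [if_neg hij, if_neg]
      intro ⟨ha, hb⟩
      exact hij (Fin.ext (by omega))
  rw [resultant, hM, Matrix.det_diagonal, Finset.prod_const, Finset.card_univ,
    Fintype.card_fin, hd, zero_add]

theorem resWrt_eq_pow_left {f g : MvPolynomial σ R} (hk : k ∉ f.vars) :
    resWrt k f g = f ^ (toUnivar k g).natDegree := by
  obtain ⟨c, hc, hcf⟩ := toUnivar_eq_C hk
  rw [resWrt, hc, resultant_C_left, map_pow, hcf]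

theorem resWrt_eq_pow_right {f g : MvPolynomial σ R} (hk : k ∉ g.vars) :
    resWrt k f g = g ^ (toUnivar k f).natDegree := by
  obtain ⟨c, hc, hcf⟩ := toUnivar_eq_C hk
  rw [resWrt, hc, resultant_C_right, map_pow, hcf]

end Res


/-- Let `G` be a chordal structure of `A` (with vertices among
`x_1, …, x_n`, identified with `Fin n` where `x_{i+1}` is the index `i`) for which
`x_n > ⋯ > x_1` (i.e. the natural order on `Fin n`) is a perfect elimination ordering.
If `P n = A` and `P i = Proj(P (i+1), x_{i+1})` for `i = n-1, …, 1`, then for every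
`1 ≤ i ≤ n`, `G` is a chordal structure of `P i` and every polynomial in `P i` involves only
the variables `x_1, …, x_i`. -/
theorem chordalStructure_projection_procedure {K : Type*} [Field K] {n : ℕ}
    (A : Set (MvPolynomial (Fin n) K)) (hA : A.Finite)
    (G : SimpleGraph (Fin n))
    (hsub : assocGraph A ≤ G)
    (hpeo : IsPEO G (fun u v : Fin n => u < v))
    (P : ℕ → Set (MvPolynomial (Fin n) K))
    (hPn : P n = A)
    (hP : ∀ i : ℕ, ∀ _h1 : 1 ≤ i, ∀ _h2 : i ≤ n - 1,
      P i = ProjSet (⟨i, by omega⟩ : Fin n) (P (i + 1))) :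
    ∀ i : ℕ, 1 ≤ i → i ≤ n →
      ChordalStructure G (P i) ∧ ∀ f ∈ P i, ∀ y ∈ f.vars, (y : ℕ) < i := by
  classical
  have hChord : ChordalGraph G :=
    ⟨fun u v => u < v, by infer_instance, hpeo⟩
  have hle : ∀ B : Set (MvPolynomial (Fin n) K),
      (∀ f ∈ B, ∀ y ∈ f.vars, ∀ z ∈ f.vars, y ≠ z → G.Adj y z) → assocGraph B ≤ G := by
    intro B hB y z hyz
    obtain ⟨hne, f, hf, hy, hz⟩ := hyz
    exact hB f hf y hy z hz hne
  suffices H : ∀ k, ∀ i, 1 ≤ i → i ≤ n → n - i = k →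
      (∀ f ∈ P i, ∀ y ∈ f.vars, (y : ℕ) < i) ∧
      (∀ f ∈ P i, ∀ y ∈ f.vars, ∀ z ∈ f.vars, y ≠ z → G.Adj y z) by
    intro i h1 h2
    obtain ⟨hv, hc⟩ := H (n - i) i h1 h2 rfl
    exact ⟨⟨hChord, hle _ hc⟩, hv⟩
  intro k
  induction k with
  | zero =>
    intro i h1 h2 hk
    have : i = n := by omega
    subst this
    rw [hPn]
    refine ⟨fun f _ y _ => y.isLt, fun f hf y hy z hz hne => ?_⟩
    exact hsub ⟨hne, f, hf, hy, hz⟩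
  | succ k ih =>
    intro i h1 h2 hk
    obtain ⟨IHv, IHc⟩ := ih (i + 1) (by omega) (by omega) (by omega)
    have hPi : P i = ProjSet (⟨i, by omega⟩ : Fin n) (P (i + 1)) := hP i h1 (by omega)
    set x : Fin n := (⟨i, by omega⟩ : Fin n) with hx
    -- variables of members of P (i+1) that are distinct from x are < i
    have hlt : ∀ f ∈ P (i + 1), ∀ y : Fin n, y ∈ f.vars → y ≠ x → (y : ℕ) < i := by
      intro f hf y hy hyx
      have := IHv f hf y hy
      have : (y : ℕ) ≠ i := fun hh => hyx (Fin.ext hh)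
      omega
    have main : ∀ h ∈ P i, (∀ y ∈ h.vars, (y : ℕ) < i) ∧
        (∀ y ∈ h.vars, ∀ z ∈ h.vars, y ≠ z → G.Adj y z) := by
      intro h hh
      rw [hPi] at hh
      rcases hh with (⟨⟨f, hf, j, rfl⟩, -⟩ | ⟨f, hf, rfl⟩) | ⟨f, hf, g, hg, hfg, rfl⟩
      · -- coefficient case
        have hsubv : ∀ y ∈ (coeffWrt x f j).vars, y ∈ f.vars ∧ y ≠ x := fun y hy =>
          mem_vars_coeffWrt hy
        refine ⟨fun y hy => hlt f hf y (hsubv y hy).1 (hsubv y hy).2, ?_⟩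
        intro y hy z hz hne
        exact IHc f hf y (hsubv y hy).1 z (hsubv z hz).1 hne
      · -- discriminant case
        have hsubv : ∀ y ∈ (resWrt x f (pderiv x f)).vars, y ∈ f.vars ∧ y ≠ x := by
          intro y hy
          obtain ⟨hy1, hy2⟩ := mem_vars_resWrt hy
          refine ⟨?_, hy2⟩
          rcases hy1 with hy1 | hy1
          · exact hy1
          · exact vars_pderiv_subset x f hy1
        refine ⟨fun y hy => hlt f hf y (hsubv y hy).1 (hsubv y hy).2, ?_⟩
        intro y hy z hz hne
        exact IHc f hf y (hsubv y hy).1 z (hsubv z hz).1 hne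
      · -- resultant case
        have hsubv : ∀ y ∈ (resWrt x f g).vars, (y ∈ f.vars ∨ y ∈ g.vars) ∧ y ≠ x := fun y hy =>
          mem_vars_resWrt hy
        refine ⟨?_, ?_⟩
        · intro y hy
          obtain ⟨hy1, hy2⟩ := hsubv y hy
          rcases hy1 with hy1 | hy1
          · exact hlt f hf y hy1 hy2
          · exact hlt g hg y hy1 hy2
        · by_cases hxf : x ∈ f.vars
          · by_cases hxg : x ∈ g.vars
            · -- main case : use the perfect elimination ordering at x
              intro y hy z hz hne
              have hmem : ∀ u ∈ (resWrt x f g).vars,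
                  u ∈ {u : Fin n | u < x ∧ G.Adj u x} := by
                intro u hu
                obtain ⟨hu1, hu2⟩ := hsubv u hu
                have hult : u < x := by
                  have := hlt f hf
                  have hlt' : (u : ℕ) < i := by
                    rcases hu1 with hu1 | hu1
                    · exact hlt f hf u hu1 hu2
                    · exact hlt g hg u hu1 hu2
                  exact Fin.lt_iff_val_lt_val.mpr hlt'
                have hadj : G.Adj u x := by
                  rcases hu1 with hu1 | hu1
                  · exact IHc f hf u hu1 x hxf hu2
                  · exact IHc g hg u hu1 x hxg hu2
                exact ⟨hult, hadj⟩
              exact hpeo x (Set.mem_insert_iff.mpr (Or.inr (hmem y hy)))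
                (Set.mem_insert_iff.mpr (Or.inr (hmem z hz))) hne
            · -- x does not occur in g
              intro y hy z hz hne
              rw [resWrt_eq_pow_right hxg] at hy hz
              exact IHc g hg y (vars_pow _ _ hy) z (vars_pow _ _ hz) hne
          · -- x does not occur in f
            intro y hy z hz hne
            rw [resWrt_eq_pow_left hxf] at hy hz
            exact IHc f hf y (vars_pow _ _ hy) z (vars_pow _ _ hz) hne
    exact ⟨fun f hf => (main f hf).1, fun f hf => (main f hf).2⟩
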